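/- Let p, q, D be positive integers. For each j = 1, …, D let the real (p+q)×(p+q) block matrix ((A_j, B_j), (B_jᵀ, C_j)) be positive semidefinite, where A_j is p×p symmetric, B_j is p×q, and C_j is q×q positive definite. Then ∑_{j=1}^D C_j is positive definite and, in the Loewner order, ∑_{j=1}^D (A_j − B_j C_j⁻¹ B_jᵀ) ⪯ (∑_{j=1}^D A_j) − (∑_{j=1}^D B_j)(∑_{j=1}^D C_j)⁻¹(∑_{j=1}^D B_j)ᵀ; that is, the Schur complement of the sum of positive semidefinite block matrices dominates the sum of their Schur complements. -/

import Mathlib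

open Matrix

private lemma posSemidef_sum' {n : Type*} [Fintype n] {D : ℕ}
    (M : Fin D → Matrix n n ℝ)
    (h : ∀ j, (M j).PosSemidef) : (∑ j, M j).PosSemidef := by
  classical
  refine Finset.sum_induction M Matrix.PosSemidef
    (fun a b ha hb => ha.add hb) Matrix.PosSemidef.zero (fun j _ => h j)

/-- **Schur complement of a sum dominates the sum of Schur complements.**
If each block matrix `((Aⱼ, Bⱼ), (Bⱼᵀ, Cⱼ))` is positive semidefinite with `Cⱼ` positive
definite, then `∑ Cⱼ` is positive definite and, in the Loewner order,
`∑ (Aⱼ − Bⱼ Cⱼ⁻¹ Bⱼᵀ) ⪯ (∑ Aⱼ) − (∑ Bⱼ)(∑ Cⱼ)⁻¹(∑ Bⱼ)ᵀ`. -/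
theorem schur_complement_of_sum_dominates_sum_of_schur_complements
    (p q D : ℕ) (hp : 0 < p) (hq : 0 < q) (hD : 0 < D)
    (A : Fin D → Matrix (Fin p) (Fin p) ℝ)
    (B : Fin D → Matrix (Fin p) (Fin q) ℝ)
    (C : Fin D → Matrix (Fin q) (Fin q) ℝ)
    (hA : ∀ j, (A j).IsSymm)
    (hC : ∀ j, (C j).PosDef)
    (hblock : ∀ j, (Matrix.fromBlocks (A j) (B j) (B j)ᵀ (C j)).PosSemidef) :
    (∑ j, C j).PosDef ∧
      ((∑ j, A j) - (∑ j, B j) * (∑ j, C j)⁻¹ * (∑ j, B j)ᵀ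
        - ∑ j, (A j - B j * (C j)⁻¹ * (B j)ᵀ)).PosSemidef := by
  classical
  have hT : ∀ (m n : ℕ) (M : Matrix (Fin m) (Fin n) ℝ), Mᴴ = Mᵀ := by
    intro m n M; ext i j; simp [conjTranspose_apply]
  -- ∑ C is positive definite
  have z : Fin D := ⟨0, hD⟩
  have hCsum : (∑ j, C j).PosDef := by
    rw [← Finset.add_sum_erase Finset.univ C (Finset.mem_univ z)]
    refine (hC z).add_posSemidef ?_
    refine Finset.sum_induction C Matrix.PosSemidef
      (fun a b ha hb => ha.add hb) Matrix.PosSemidef.zero (fun j _ => (hC j).posSemidef)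
  refine ⟨hCsum, ?_⟩
  haveI : Invertible (∑ j, C j) := hCsum.isUnit.invertible
  -- each modified block matrix is PSD
  have hblock' : ∀ j,
      (Matrix.fromBlocks (B j * (C j)⁻¹ * (B j)ᵀ) (B j) (B j)ᵀ (C j)).PosSemidef := by
    intro j
    haveI : Invertible (C j) := (hC j).isUnit.invertible
    rw [← hT p q (B j)]
    rw [Matrix.PosDef.fromBlocks₂₂ _ _ (hC j)]
    rw [hT p q (B j)]
    simpa using Matrix.PosSemidef.zero (n := Fin p) (R := ℝ)
  -- sum of the modified blocks
  have hsumblock :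
      (Matrix.fromBlocks (∑ j, B j * (C j)⁻¹ * (B j)ᵀ) (∑ j, B j) (∑ j, B j)ᵀ
        (∑ j, C j)).PosSemidef := by
    have := posSemidef_sum' _ hblock'
    convert this using 1
    ext i k
    rcases i with i | i <;> rcases k with k | k <;>
      simp [Matrix.sum_apply, Matrix.fromBlocks, Matrix.transpose_apply]
  -- apply Schur complement to the sum
  have key : ((∑ j, B j * (C j)⁻¹ * (B j)ᵀ)
      - (∑ j, B j) * (∑ j, C j)⁻¹ * (∑ j, B j)ᵀ).PosSemidef := by
    rw [← hT p q (∑ j, B j)] at hsumblock ⊢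
    exact (Matrix.PosDef.fromBlocks₂₂ _ _ hCsum).mp hsumblock
  convert key using 1
  rw [Finset.sum_sub_distrib]
  abel
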